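/- Let K be a number field and let ξ ∈ O_K^{I_K} satisfy ξ_{q·b} ≡ ξ_b (mod q^{1+v_q(b)}) for all q ∈ P_K and all b ∈ I_K. Fix p ∈ P_K and set η := ψ_p ξ − ξ^{#k_p} ∈ O_K^{I_K}. Then for all a ∈ I_K: (i) η_{p·a} − η_a ∈ p^{2+v_p(a)}, and (ii) for every prime q ∈ P_K with q ≠ p, η_{q·a} − η_a ∈ q^{1+v_q(a)}. -/

import Mathlib

open NumberField

noncomputable section

/-- The multiplicative monoid `I_K` of nonzero ideals of the ring of integers of `K`. -/
def IdealMonoid (K : Type) [Field K] [NumberField K] : Submonoid (Ideal (𝓞 K)) where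
  carrier := {I | I ≠ ⊥}
  mul_mem' := by
    intro a b ha hb h
    rcases Ideal.mul_eq_bot.mp h with h' | h'
    · exact ha h'
    · exact hb h'
  one_mem' := by
    simp only [Set.mem_setOf_eq, Ideal.one_eq_top]
    exact top_ne_bot

/-- `I_K`, the monoid of nonzero ideals, as a type. -/
abbrev IK (K : Type) [Field K] [NumberField K] := ↥(IdealMonoid K)

/-- `P_K`, the set of nonzero prime ideals of `𝓞 K`, as a type. -/
def PrimeIdeal (K : Type) [Field K] [NumberField K] :=
  {p : Ideal (𝓞 K) // p.IsPrime ∧ p ≠ ⊥}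

/-- A nonzero prime ideal, regarded as an element of `I_K`. -/
def PrimeIdeal.toIK {K : Type} [Field K] [NumberField K] (p : PrimeIdeal K) : IK K :=
  ⟨p.1, p.2.2⟩

/-- `#k_p`: the cardinality of the residue ring `R ⧸ p`. -/
def residueCard {R : Type} [CommRing R] (p : Ideal R) : ℕ :=
  Nat.card (R ⧸ p)

/-- The shift operator `ψ_a` on `A^{I_K}`: `(ψ_a ξ)_b = ξ_{a·b}`. -/
def shift {K : Type} [Field K] [NumberField K] {A : Type} (a : IK K)
    (ξ : IK K → A) : IK K → A :=
  fun b => ξ (a * b)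

/-- For an ideal `p` of `𝓞 K` and a subset `S ⊆ A^{I_K}`, the set `p·S` of all finite
sums of products of elements of `p` with elements of (the module generated by) `S`. -/
def idealMulSet {K : Type} [Field K] [NumberField K] {A : Type} [CommRing A]
    [Algebra (𝓞 K) A] (p : Ideal (𝓞 K)) (S : Set (IK K → A)) : Set (IK K → A) :=
  ↑(p • Submodule.span (𝓞 K) S)

/-- The descending chain `U_n(A)` of subsets of `A^{I_K}`. -/
def UnSet (K : Type) [Field K] [NumberField K] (A : Type) [CommRing A]
    [Algebra (𝓞 K) A] : ℕ → Set (IK K → A)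
  | 0 => Set.univ
  | n + 1 => {ξ | ξ ∈ UnSet K A n ∧ ∀ p : PrimeIdeal K,
      shift p.toIK ξ - ξ ^ residueCard p.1 ∈ idealMulSet p.1 (UnSet K A n)}

/-- The ring of Witt vectors `W_{O_K}(A) = ⋂ₙ U_n(A)`, as a subset of `A^{I_K}`. -/
def WittSet (K : Type) [Field K] [NumberField K] (A : Type) [CommRing A]
    [Algebra (𝓞 K) A] : Set (IK K → A) :=
  ⋂ n, UnSet K A n

/-- A deterministic finite automaton with output, over input alphabet `Δ` and
output alphabet `O`. -/
structure DFAO (Δ O : Type) : Type 1 where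
  State : Type
  [finState : Finite State]
  trans : State → Δ → State
  start : State
  out : State → O

/-- The output of a DFAO on an input word, processing letters from left to right. -/
def DFAO.output {Δ O : Type} (M : DFAO Δ O) (l : List Δ) : O :=
  M.out (l.foldl M.trans M.start)

/-- `ξ ∈ A^{I_K}` is automatic if some DFAO with input alphabet `P_K` and output
alphabet `A` produces `ξ_a` from every word of primes whose product is `a`. -/
def IsAutomatic {K : Type} [Field K] [NumberField K] {A : Type}
    (ξ : IK K → A) : Prop :=
  ∃ M : DFAO (PrimeIdeal K) A, ∀ (l : List (PrimeIdeal K)) (a : IK K),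
    (a : Ideal (𝓞 K)) = (l.map Subtype.val).prod → ξ a = M.output l

/-- `v_p(a)`: the largest `e` such that `p^e` divides `a`. -/
def vIdeal {R : Type} [CommRing R] (p a : Ideal R) : ℕ :=
  sSup {e : ℕ | p ^ e ∣ a}


/-- If the multiplicity of `p` in `a` is finite, `vIdeal p a` equals `multiplicity p a`. -/
lemma vIdeal_eq_multiplicity {R : Type} [CommRing R] {p a : Ideal R}
    (h : FiniteMultiplicity p a) : vIdeal p a = multiplicity p a := by
  obtain ⟨n, hn⟩ := h
  have hbdd : BddAbove {e : ℕ | p ^ e ∣ a} := by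
    refine ⟨n, fun e he => ?_⟩
    by_contra hlt
    push_neg at hlt
    exact hn (dvd_trans (pow_dvd_pow p hlt) he)
  have hne : ({e : ℕ | p ^ e ∣ a}).Nonempty := ⟨0, by simp⟩
  have hmem : sSup {e : ℕ | p ^ e ∣ a} ∈ {e : ℕ | p ^ e ∣ a} := Nat.sSup_mem hne hbdd
  have hnot : ¬ p ^ (sSup {e : ℕ | p ^ e ∣ a} + 1) ∣ a := by
    intro hdvd
    have hle := le_csSup hbdd (Set.mem_setOf_eq ▸ hdvd :
      sSup {e : ℕ | p ^ e ∣ a} + 1 ∈ {e : ℕ | p ^ e ∣ a})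
    omega
  exact ((FiniteMultiplicity.multiplicity_eq_iff ⟨n, hn⟩).mpr ⟨hmem, hnot⟩).symm

/-- If `x ≡ y mod p^(k+1)` and `N ∈ p`, then `x^N ≡ y^N mod p^(k+2)`. -/
lemma pow_sub_pow_mem {R : Type} [CommRing R] (p : Ideal R) {x y : R} {k : ℕ}
    (hd : x - y ∈ p ^ (k + 1)) {N : ℕ} (hN : ((N : ℕ) : R) ∈ p) :
    x ^ N - y ^ N ∈ p ^ (k + 2) := by
  have hx : x = y + (x - y) := by ring
  rw [hx, add_pow, Finset.sum_range_succ]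
  simp only [Nat.sub_self, pow_zero, Nat.choose_self, Nat.cast_one, mul_one]
  rw [add_sub_cancel_right]
  refine Ideal.sum_mem _ fun m hm => ?_
  rw [Finset.mem_range] at hm
  rcases eq_or_lt_of_le (Nat.succ_le_of_lt hm) with h1 | h2
  · -- m + 1 = N : the linear term
    have hNm : N - m = 1 := by omega
    have hc : N.choose m = N := by
      have hm' : m = N - 1 := by omega
      subst hm'
      rw [Nat.choose_symm (by omega : 1 ≤ N), Nat.choose_one_right]
    rw [hNm, hc, pow_one]
    have hrw : y ^ m * (x - y) * ((N : ℕ) : R) = y ^ m * ((x - y) * ((N : ℕ) : R)) := by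
      ring
    rw [hrw]
    refine Ideal.mul_mem_left _ _ ?_
    have hmm := Ideal.mul_mem_mul hd hN
    rwa [← pow_succ] at hmm
  · -- m + 1 < N : quadratic or higher
    refine Ideal.mul_mem_right _ _ (Ideal.mul_mem_left _ _ ?_)
    have h1 : (x - y) ^ (N - m) ∈ (p ^ (k + 1)) ^ (N - m) := Ideal.pow_mem_pow hd _
    rw [← pow_mul] at h1
    have h2' : 2 ≤ N - m := by omega
    have hle : k + 2 ≤ (k + 1) * (N - m) := by nlinarith
    exact Ideal.pow_le_pow_right hle h1

set_option synthInstance.maxHeartbeats 1000000 in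
set_option maxHeartbeats 1000000 in
/-- if `ξ ∈ O_K^{I_K}` satisfies `ξ_{q·b} ≡ ξ_b (mod q^{1+v_q(b)})` for all
primes `q` and ideals `b`, and `η := ψ_p ξ - ξ^{#k_p}`, then
(i) `η_{p·a} - η_a ∈ p^{2+v_p(a)}` and (ii) `η_{q·a} - η_a ∈ q^{1+v_q(a)}` for `q ≠ p`. -/
theorem eta_congruence (K : Type) [Field K] [NumberField K]
    (ξ : IK K → 𝓞 K)
    (hξ : ∀ (q : PrimeIdeal K) (b : IK K),
      ξ (q.toIK * b) - ξ b ∈ q.1 ^ (1 + vIdeal q.1 (b : Ideal (𝓞 K))))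
    (p : PrimeIdeal K) :
    ∀ a : IK K,
      (shift p.toIK ξ - ξ ^ residueCard p.1) (p.toIK * a)
          - (shift p.toIK ξ - ξ ^ residueCard p.1) a
        ∈ p.1 ^ (2 + vIdeal p.1 (a : Ideal (𝓞 K))) ∧
      ∀ q : PrimeIdeal K, q.1 ≠ p.1 →
        (shift p.toIK ξ - ξ ^ residueCard p.1) (q.toIK * a)
            - (shift p.toIK ξ - ξ ^ residueCard p.1) a
          ∈ q.1 ^ (1 + vIdeal q.1 (a : Ideal (𝓞 K))) := by
  intro a
  have ha0 : (a : Ideal (𝓞 K)) ≠ 0 := by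
    have h2 : (a : Ideal (𝓞 K)) ≠ ⊥ := a.2
    rw [Ideal.zero_eq_bot]
    exact h2
  have hpPrime : Prime p.1 := Ideal.prime_of_isPrime p.2.2 p.2.1
  letI : Fintype (𝓞 K ⧸ p.1) := @Fintype.ofFinite _ (Ideal.finiteQuotientOfFreeOfNeBot p.1 p.2.2)
  have hN : ((residueCard p.1 : ℕ) : 𝓞 K) ∈ p.1 := by
    have h0 : ((residueCard p.1 : ℕ) : 𝓞 K ⧸ p.1) = 0 := by
      rw [residueCard, Nat.card_eq_fintype_card]
      exact Nat.cast_card_eq_zero _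
    rw [← Ideal.Quotient.eq_zero_iff_mem, map_natCast]
    exact h0
  have hfin : ∀ (b : Ideal (𝓞 K)), b ≠ 0 → ∀ q : PrimeIdeal K,
      FiniteMultiplicity q.1 b := fun b hb q =>
    FiniteMultiplicity.of_not_isUnit (Ideal.prime_of_isPrime q.2.2 q.2.1).not_isUnit hb
  have hq0 : ∀ q : PrimeIdeal K, q.1 ≠ 0 := by
    intro q
    have h2 := q.2.2
    rw [Ideal.zero_eq_bot]
    exact h2
  -- multiplicity of q in q * a
  have hvmul : ∀ q : PrimeIdeal K,
      vIdeal q.1 (q.1 * (a : Ideal (𝓞 K))) = 1 + vIdeal q.1 (a : Ideal (𝓞 K)) := by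
    intro q
    have hq : Prime q.1 := Ideal.prime_of_isPrime q.2.2 q.2.1
    have hfqa := hfin _ (mul_ne_zero (hq0 q) ha0) q
    rw [vIdeal_eq_multiplicity hfqa, vIdeal_eq_multiplicity (hfin _ ha0 q),
      multiplicity_mul hq hfqa, multiplicity_self]
  -- multiplicity of q ≠ p in p * a
  have hvne : ∀ q : PrimeIdeal K, q.1 ≠ p.1 →
      vIdeal q.1 (p.1 * (a : Ideal (𝓞 K))) = vIdeal q.1 (a : Ideal (𝓞 K)) := by
    intro q hqp
    have hq : Prime q.1 := Ideal.prime_of_isPrime q.2.2 q.2.1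
    have hnd : ¬ q.1 ∣ p.1 := by
      rintro ⟨c, hc⟩
      rcases hpPrime.irreducible.isUnit_or_isUnit hc with hu | hu
      · exact hq.not_isUnit hu
      · rw [Ideal.isUnit_iff.mp hu, Ideal.mul_top] at hc
        exact hqp hc.symm
    have hfpa := hfin _ (mul_ne_zero (hq0 p) ha0) q
    rw [vIdeal_eq_multiplicity hfpa, vIdeal_eq_multiplicity (hfin _ ha0 q),
      multiplicity_mul hq hfpa, multiplicity_eq_zero.mpr hnd, zero_add]
  have hcoe : ∀ (q : PrimeIdeal K) (b : IK K),
      ((q.toIK * b : IK K) : Ideal (𝓞 K)) = q.1 * (b : Ideal (𝓞 K)) := fun _ _ => rfl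
  simp only [shift, Pi.sub_apply, Pi.pow_apply]
  constructor
  · -- part (i)
    have hA := hξ p (p.toIK * a)
    rw [hcoe p a, hvmul p] at hA
    have e1 : 1 + (1 + vIdeal p.1 (a : Ideal (𝓞 K))) = vIdeal p.1 (a : Ideal (𝓞 K)) + 2 := by
      omega
    rw [e1] at hA
    have hB0 := hξ p a
    rw [Nat.add_comm] at hB0
    have hB := pow_sub_pow_mem p.1 hB0 hN
    have e2 : 2 + vIdeal p.1 (a : Ideal (𝓞 K)) = vIdeal p.1 (a : Ideal (𝓞 K)) + 2 := by
      omega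
    rw [e2]
    have hrw : ξ (p.toIK * (p.toIK * a)) - ξ (p.toIK * a) ^ residueCard p.1
        - (ξ (p.toIK * a) - ξ a ^ residueCard p.1)
        = (ξ (p.toIK * (p.toIK * a)) - ξ (p.toIK * a))
          - (ξ (p.toIK * a) ^ residueCard p.1 - ξ a ^ residueCard p.1) := by
      ring
    rw [hrw]
    exact sub_mem hA hB
  · -- part (ii)
    intro q hqp
    have hA := hξ q (p.toIK * a)
    rw [hcoe p a, hvne q hqp, mul_left_comm] at hA
    have hB : ξ (q.toIK * a) ^ residueCard p.1 - ξ a ^ residueCard p.1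
        ∈ q.1 ^ (1 + vIdeal q.1 (a : Ideal (𝓞 K))) := by
      obtain ⟨c, hc⟩ := sub_dvd_pow_sub_pow (ξ (q.toIK * a)) (ξ a) (residueCard p.1)
      rw [hc]
      exact Ideal.mul_mem_right c _ (hξ q a)
    have hrw : ξ (p.toIK * (q.toIK * a)) - ξ (q.toIK * a) ^ residueCard p.1
        - (ξ (p.toIK * a) - ξ a ^ residueCard p.1)
        = (ξ (p.toIK * (q.toIK * a)) - ξ (p.toIK * a))
          - (ξ (q.toIK * a) ^ residueCard p.1 - ξ a ^ residueCard p.1) := by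
      ring
    rw [hrw]
    exact sub_mem hA hB

end
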